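/- Let c: [0,∞) → X be a geodesic ray in a proper geodesic δ-hyperbolic space X converging to a boundary point η ≠ ξ, let b be a Busemann function based at ξ with base point o, and let o' = c(0). Then for all sufficiently large t, b(c(t)) ≥ t − d(o,o') − 2(ξ|η)_o − 8δ. -/

import Mathlib

open Filter Set Metric Real MeasureTheory

noncomputable section

/-- The Gromov product `(x|y)_o`. -/
def gp {X : Type*} [MetricSpace X] (o x y : X) : ℝ :=
  (dist x o + dist y o - dist x y) / 2

/-- A Gromov sequence (converging to a point of the boundary at infinity). -/
def IsGromovSeq {X : Type*} [MetricSpace X] (o : X) (s : ℕ → X) : Prop :=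
  ∀ N : ℝ, ∃ I : ℕ, ∀ i j : ℕ, I ≤ i → I ≤ j → N ≤ gp o (s i) (s j)

/-- Equivalence of Gromov sequences. -/
def GromovEquiv {X : Type*} [MetricSpace X] (o : X) (s t : ℕ → X) : Prop :=
  Tendsto (fun n => gp o (s n) (t n)) atTop atTop

/-- Extended Gromov product `(x|ξ)_w` of a point `x` with the boundary point `ξ`
represented by the Gromov sequence `s`. -/
def egp {X : Type*} [MetricSpace X] (w x : X) (s : ℕ → X) : ℝ :=
  sInf {r | ∃ t : ℕ → X, GromovEquiv w s t ∧ r = liminf (fun n => gp w x (t n)) atTop}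

/-- Extended Gromov product `(ξ|η)_w` of two boundary points represented by Gromov
sequences `s` and `t`. -/
def egp2 {X : Type*} [MetricSpace X] (w : X) (s t : ℕ → X) : ℝ :=
  sInf {r | ∃ s' t' : ℕ → X, GromovEquiv w s s' ∧ GromovEquiv w t t' ∧
    r = liminf (fun n => gp w (s' n) (t' n)) atTop}

/-- The Busemann function based at the boundary point represented by `s`, with base point `o`:
`b(x) = (ξ|o)_x - (ξ|x)_o`. -/
def busemann {X : Type*} [MetricSpace X] (o : X) (s : ℕ → X) (x : X) : ℝ :=
  egp x o s - egp o x s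

/-- `δ`-hyperbolicity in the sense of Gromov. -/
def IsDeltaHyp (X : Type*) [MetricSpace X] (δ : ℝ) : Prop :=
  ∀ o x y z : X, min (gp o x z) (gp o z y) - δ ≤ gp o x y

/-- A geodesic metric space: every pair of points is joined by a geodesic. -/
def GeodesicSpace (X : Type*) [MetricSpace X] : Prop :=
  ∀ x y : X, ∃ γ : ℝ → X, γ 0 = x ∧ γ (dist x y) = y ∧
    ∀ a ∈ Icc (0:ℝ) (dist x y), ∀ b ∈ Icc (0:ℝ) (dist x y), dist (γ a) (γ b) = |a - b|

/-! ### Auxiliary lemmas -/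

section Aux

variable {X : Type*} [MetricSpace X]

lemma gp_nonneg' (o x y : X) : 0 ≤ gp o x y := by
  have h := dist_triangle x o y
  have h2 : dist o y = dist y o := dist_comm o y
  unfold gp; linarith

lemma gp_le_left' (o x y : X) : gp o x y ≤ dist x o := by
  have h := dist_triangle y x o
  have h2 : dist y x = dist x y := dist_comm y x
  unfold gp; linarith

lemma gp_comm' (o x y : X) : gp o x y = gp o y x := by
  unfold gp; rw [dist_comm x y]; ring

lemma gp_self' (o x : X) : gp o x x = dist x o := by
  unfold gp; simp

lemma gp_base' (o w x y : X) : gp o x y - dist o w ≤ gp w x y := by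
  have h1 := dist_triangle x w o
  have h2 := dist_triangle y w o
  have h3 : dist w o = dist o w := dist_comm w o
  unfold gp; linarith

lemma gp_add' (o x z : X) : gp x o z + gp o x z = dist o x := by
  unfold gp
  rw [show dist x o = dist o x from dist_comm x o, show dist z o = dist o z from dist_comm z o,
    show dist x z = dist z x from dist_comm x z]
  ring

lemma gp_bddBelow' (o x : X) (r : ℕ → X) :
    IsBoundedUnder (· ≥ ·) (atTop : Filter ℕ) (fun n => gp o x (r n)) :=
  isBoundedUnder_of ⟨0, fun n => gp_nonneg' o x (r n)⟩

lemma gp_cobdd' (o x : X) (r : ℕ → X) :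
    IsCoboundedUnder (· ≥ ·) (atTop : Filter ℕ) (fun n => gp o x (r n)) :=
  isCoboundedUnder_ge_of_eventually_le atTop
    (Eventually.of_forall fun n => gp_le_left' o x (r n))

lemma equiv_refl' {o : X} {s : ℕ → X} (hs : IsGromovSeq o s) : GromovEquiv o s s := by
  rw [GromovEquiv, Filter.tendsto_atTop]
  intro N
  obtain ⟨I, hI⟩ := hs N
  exact eventually_atTop.2 ⟨I, fun n hn => by simpa [gp_self'] using hI n n hn hn⟩

lemma equiv_base' (o w : X) {s t : ℕ → X} (h : GromovEquiv o s t) : GromovEquiv w s t := by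
  have h' : Tendsto (fun n => gp o (s n) (t n) - dist o w) atTop atTop :=
    tendsto_atTop_add_const_right _ _ h
  exact tendsto_atTop_mono (fun n => gp_base' o w (s n) (t n)) h'

lemma pairwise_large' {δ : ℝ} (hhyp : IsDeltaHyp X δ) {o : X} {s s1 : ℕ → X}
    (hs : IsGromovSeq o s) (h1 : GromovEquiv o s s1) (R : ℝ) :
    ∃ I : ℕ, ∀ n m : ℕ, I ≤ n → I ≤ m → R ≤ gp o (s1 n) (s m) := by
  obtain ⟨I0, hI0⟩ := hs (R + δ)
  have hev : ∀ᶠ n in (atTop : Filter ℕ), R + δ ≤ gp o (s n) (s1 n) :=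
    Filter.tendsto_atTop.1 h1 (R + δ)
  obtain ⟨I1, hI1⟩ := eventually_atTop.1 hev
  refine ⟨max I0 I1, fun n m hn hm => ?_⟩
  have h2 := hhyp o (s1 n) (s m) (s n)
  have h3 : R + δ ≤ gp o (s1 n) (s n) := by
    rw [gp_comm']; exact hI1 n (le_trans (le_max_right _ _) hn)
  have h4 : R + δ ≤ gp o (s n) (s m) :=
    hI0 n m (le_trans (le_max_left _ _) hn) (le_trans (le_max_left _ _) hm)
  have h5 := le_min h3 h4
  linarith

lemma le_add_of_forall_small' {a b : ℝ} (h : ∀ ε : ℝ, 0 < ε → ε < 1 → a ≤ b + ε) : a ≤ b := by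
  by_contra hc
  push_neg at hc
  have hab : 0 < a - b := by linarith
  have hε1 : 0 < min ((a - b) / 2) (1 / 2) := lt_min (by linarith) (by norm_num)
  have hε2 : min ((a - b) / 2) (1 / 2) < 1 :=
    lt_of_le_of_lt (min_le_right _ _) (by norm_num)
  have h2 := h _ hε1 hε2
  have h3 := min_le_left ((a - b) / 2) (1 / 2)
  linarith

/-- Key pointwise estimate: `b(x) ≥ d(o,x) - 2 (x|ξ)_o - δ` where `(x|ξ)_o` is realized by
the liminf along the defining sequence `s`. -/
lemma busemann_key' {δ : ℝ} (hδ : 0 ≤ δ) (hhyp : IsDeltaHyp X δ) {o : X} {s : ℕ → X}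
    (hs : IsGromovSeq o s) (x : X) :
    dist o x - 2 * liminf (fun n => gp o x (s n)) atTop - δ ≤ busemann o s x := by
  set L := liminf (fun n => gp o x (s n)) atTop with hL
  have hU1 : egp o x s ≤ L := by
    apply csInf_le
    · refine ⟨0, fun r hr => ?_⟩
      obtain ⟨t, htq, rfl⟩ := hr
      exact le_liminf_of_le (gp_cobdd' o x t)
        (Eventually.of_forall fun n => gp_nonneg' o x (t n))
    · exact ⟨s, equiv_refl' hs, hL⟩
  have hU2 : dist o x - L - δ ≤ egp x o s := by
    refine le_csInf ⟨_, s, equiv_base' o x (equiv_refl' hs), rfl⟩ ?_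
    rintro r ⟨t, htq, rfl⟩
    have hot : GromovEquiv o s t := equiv_base' x o htq
    have hmain : ∀ ε : ℝ, 0 < ε → ε < 1 →
        dist o x - L - δ ≤ liminf (fun n => gp x o (t n)) atTop + ε := by
      intro ε hε _
      obtain ⟨I1, hI1⟩ := pairwise_large' hhyp hs hot (dist x o)
      have hfreq : ∃ᶠ m in (atTop : Filter ℕ), gp o x (s m) < L + ε :=
        frequently_lt_of_liminf_lt (gp_cobdd' o x s) (by linarith)
      obtain ⟨m, hm1, hm2⟩ := (hfreq.and_eventually (eventually_ge_atTop I1)).exists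
      have hlim : dist o x - L - δ - ε ≤ liminf (fun n => gp x o (t n)) atTop := by
        apply le_liminf_of_le (gp_cobdd' x o t)
        filter_upwards [eventually_ge_atTop I1] with n hn
        have hbig : dist x o ≤ gp o (t n) (s m) := hI1 n m hn hm2
        have hhb := hhyp o x (s m) (t n)
        have hminle : gp o x (t n) ≤ gp o (t n) (s m) :=
          le_trans (gp_le_left' o x (t n)) hbig
        rw [min_eq_left hminle] at hhb
        have hadd := gp_add' o x (t n)
        linarith
      linarith
    exact le_add_of_forall_small' hmain
  have hbuse : busemann o s x = egp x o s - egp o x s := rfl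
  linarith

end Aux

/-- If `c : [0,∞) → X` is a geodesic ray in a proper geodesic δ-hyperbolic space
converging to a boundary point `η ≠ ξ` (here `ξ, η` are represented by the Gromov
sequences `s, t`), and `b` is the Busemann function based at `ξ` with base point `o`,
then for all sufficiently large `u`, `b(c(u)) ≥ u − d(o, c(0)) − 2(ξ|η)_o − 8δ`. -/
theorem busemann_growth_along_ray {X : Type*} [MetricSpace X] [ProperSpace X]
    (δ : ℝ) (hδ : 0 ≤ δ) (hhyp : IsDeltaHyp X δ) (hgeo : GeodesicSpace X)
    (o : X) (s t : ℕ → X) (hs : IsGromovSeq o s) (ht : IsGromovSeq o t)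
    (hne : ¬ GromovEquiv o s t)
    (c : ℝ → X) (hray : ∀ a a' : ℝ, 0 ≤ a → 0 ≤ a' → dist (c a) (c a') = |a - a'|)
    (hcη : GromovEquiv o t (fun n => c n)) :
    ∃ T : ℝ, 0 ≤ T ∧ ∀ u : ℝ, T ≤ u →
      busemann o s (c u) ≥ u - dist o (c 0) - 2 * egp2 o s t - 8 * δ := by
  classical
  set d0 := dist o (c 0) with hd0
  have hd0nn : 0 ≤ d0 := dist_nonneg
  -- a frequent upper bound on the diagonal Gromov products, from non-equivalence
  obtain ⟨B, hB⟩ : ∃ B : ℝ, ∃ᶠ n in (atTop : Filter ℕ), gp o (s n) (t n) < B := by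
    by_contra h
    push_neg at h
    exact hne (Filter.tendsto_atTop.2 h)
  set A := liminf (fun n => gp o (s n) (t n)) atTop with hA
  have hdiag_bb : IsBoundedUnder (· ≥ ·) (atTop : Filter ℕ) (fun n => gp o (s n) (t n)) :=
    isBoundedUnder_of ⟨0, fun n => gp_nonneg' _ _ _⟩
  have hdiag_cb : IsCoboundedUnder (· ≥ ·) (atTop : Filter ℕ) (fun n => gp o (s n) (t n)) := by
    refine ⟨B, fun a ha => ?_⟩
    rw [eventually_map] at ha
    obtain ⟨n, hn1, hn2⟩ := (hB.and_eventually ha).exists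
    exact le_of_lt (lt_of_le_of_lt hn2 hn1)
  have hA0 : 0 ≤ A :=
    le_liminf_of_le hdiag_cb (Eventually.of_forall fun n => gp_nonneg' _ _ _)
  -- lower bound on egp2: every element is at least A - 2δ
  have hK : A - 2 * δ ≤ egp2 o s t := by
    refine le_csInf ⟨_, s, t, equiv_refl' hs, equiv_refl' ht, rfl⟩ ?_
    rintro r ⟨s', t', hs', ht', rfl⟩
    set R := max (B + 3 * δ) (A + δ) with hR
    obtain ⟨I2, hI2⟩ := pairwise_large' hhyp hs hs' R
    obtain ⟨I3, hI3⟩ := pairwise_large' hhyp ht ht' R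
    obtain ⟨n0, hn0B, hn0ge⟩ := (hB.and_eventually (eventually_ge_atTop (max I2 I3))).exists
    have hC : ∀ᶠ m in (atTop : Filter ℕ), gp o (s' m) (t' m) ≤ R := by
      filter_upwards [eventually_ge_atTop (max I2 I3)] with m hm
      by_contra hY
      push_neg at hY
      have e1 : R ≤ gp o (s n0) (s' m) := by
        rw [gp_comm']
        exact hI2 m n0 (le_trans (le_max_left _ _) hm) (le_trans (le_max_left _ _) hn0ge)
      have e2 : R ≤ gp o (t' m) (t n0) :=
        hI3 m n0 (le_trans (le_max_right _ _) hm) (le_trans (le_max_right _ _) hn0ge)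
      have h2 := hhyp o (s' m) (t n0) (t' m)
      have h1 := hhyp o (s n0) (t n0) (s' m)
      have hm2 : R - δ ≤ gp o (s' m) (t n0) := by
        have := le_min (le_of_lt hY) e2
        linarith
      have hm1 : R - δ ≤ min (gp o (s n0) (s' m)) (gp o (s' m) (t n0)) :=
        le_min (by linarith) hm2
      have hRB : B + 3 * δ ≤ R := le_max_left _ _
      linarith
    have hYcb : IsCoboundedUnder (· ≥ ·) (atTop : Filter ℕ) (fun m => gp o (s' m) (t' m)) :=
      isCoboundedUnder_ge_of_eventually_le atTop hC
    refine le_add_of_forall_small' fun ε hε _ => ?_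
    have hAev : ∀ᶠ n in (atTop : Filter ℕ), A - ε < gp o (s n) (t n) :=
      eventually_lt_of_lt_liminf (by linarith) hdiag_bb
    obtain ⟨n1, hn1A, hn1ge⟩ := (hAev.and (eventually_ge_atTop (max I2 I3))).exists
    have hRA : A + δ ≤ R := le_max_right _ _
    have hev : ∀ᶠ m in (atTop : Filter ℕ), A - ε - 2 * δ ≤ gp o (s' m) (t' m) := by
      filter_upwards [eventually_ge_atTop (max I2 I3)] with m hm
      have e1 : R ≤ gp o (s' m) (s n1) :=
        hI2 m n1 (le_trans (le_max_left _ _) hm) (le_trans (le_max_left _ _) hn1ge)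
      have e2 : R ≤ gp o (t n1) (t' m) := by
        rw [gp_comm']
        exact hI3 m n1 (le_trans (le_max_right _ _) hm) (le_trans (le_max_right _ _) hn1ge)
      have h2 := hhyp o (s n1) (t' m) (t n1)
      have h1 := hhyp o (s' m) (t' m) (s n1)
      have k2 : A - ε - δ ≤ gp o (s n1) (t' m) := by
        have := le_min (le_of_lt hn1A) (show A - ε ≤ gp o (t n1) (t' m) by linarith)
        linarith
      have k1 : A - ε - δ ≤ min (gp o (s' m) (s n1)) (gp o (s n1) (t' m)) :=
        le_min (by linarith) k2
      linarith
    have := le_liminf_of_le hYcb hev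
    linarith
  -- the threshold
  refine ⟨max 0 (d0 + A + 3 * δ + 1), le_max_left _ _, ?_⟩
  intro u hu
  have hu0 : (0 : ℝ) ≤ u := le_trans (le_max_left _ _) hu
  have huT : d0 + A + 3 * δ + 1 ≤ u := le_trans (le_max_right _ _) hu
  -- distance estimates along the ray
  have hc0u : dist (c 0) (c u) = u := by
    rw [hray 0 u le_rfl hu0, zero_sub, abs_neg, abs_of_nonneg hu0]
  have hou : u - d0 ≤ dist o (c u) := by
    have htri := dist_triangle (c 0) o (c u)
    have e1 : dist (c 0) o = d0 := by rw [hd0, dist_comm]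
    linarith
  have hcuo : u - d0 ≤ dist (c u) o := by rw [dist_comm]; exact hou
  -- eventual lower bound on gp o (c u) (t n)
  have hE1 : ∀ᶠ n in (atTop : Filter ℕ), u - d0 - δ ≤ gp o (c u) (t n) := by
    have h1 : ∀ᶠ n : ℕ in atTop, u - d0 ≤ gp o (t n) (c (n : ℝ)) :=
      Filter.tendsto_atTop.1 hcη (u - d0)
    have h2 : ∀ᶠ n : ℕ in atTop, u ≤ (n : ℝ) :=
      tendsto_natCast_atTop_atTop.eventually_ge_atTop u
    filter_upwards [h1, h2] with n hn1 hn2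
    have hnn : (0 : ℝ) ≤ (n : ℝ) := le_trans hu0 hn2
    have d2 : dist (c 0) (c (n : ℝ)) = (n : ℝ) := by
      rw [hray 0 n le_rfl hnn, zero_sub, abs_neg, abs_of_nonneg hnn]
    have d3 : dist (c u) (c (n : ℝ)) = (n : ℝ) - u := by
      rw [hray u n hu0 hnn, abs_of_nonpos (by linarith)]
      ring
    have dn : (n : ℝ) - d0 ≤ dist (c (n : ℝ)) o := by
      have htri := dist_triangle (c 0) o (c (n : ℝ))
      have e1 : dist (c 0) o = d0 := by rw [hd0, dist_comm]
      have e2 : dist o (c (n : ℝ)) = dist (c (n : ℝ)) o := dist_comm _ _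
      linarith
    have hcc : u - d0 ≤ gp o (c u) (c (n : ℝ)) := by
      unfold gp
      rw [d3]
      linarith
    have hyp := hhyp o (c u) (t n) (c (n : ℝ))
    have hcn : u - d0 ≤ gp o (c (n : ℝ)) (t n) := by
      rw [gp_comm']; exact hn1
    have := le_min hcc hcn
    linarith
  -- the liminf of gp o (c u) (s n) is at most A + δ
  set L := liminf (fun n => gp o (c u) (s n)) atTop with hLdef
  have hLA : L ≤ A + δ := by
    refine le_add_of_forall_small' fun ε hε hε1 => ?_
    have hfr : ∃ᶠ n in (atTop : Filter ℕ), gp o (s n) (t n) < A + ε :=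
      frequently_lt_of_liminf_lt hdiag_cb (by linarith)
    have hfr2 := hfr.and_eventually hE1
    refine liminf_le_of_frequently_le ?_ (gp_bddBelow' o (c u) s)
    refine hfr2.mono fun n hn => ?_
    obtain ⟨hn1, hn2⟩ := hn
    have hyp := hhyp o (s n) (t n) (c u)
    have hbig : A + ε + δ ≤ gp o (c u) (t n) := by linarith
    have hlt : gp o (s n) (c u) < A + ε + δ := by
      rcases min_lt_iff.1
          (show min (gp o (s n) (c u)) (gp o (c u) (t n)) < A + ε + δ by linarith) with h | h
      · exact h
      · linarith
    rw [gp_comm']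
    linarith
  -- conclude
  have hkey := busemann_key' hδ hhyp hs (c u)
  rw [← hLdef] at hkey
  have hgoal : u - d0 - 2 * egp2 o s t - 8 * δ ≤ busemann o s (c u) := by
    linarith
  exact hgoal
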